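/- arXiv:2410.21109 — 4 statements merged into one kernel-verified Lean document; each statement's English description precedes it below -/
import Mathlib

section
/- A Poisson-distributed demand with price-dependent mean cannot be written in additive-multiplicative form: there do not exist functions γ(p), δ(p) and a random variable ε independent of p such that for a non-constant function λ(p), a random variable D(p) ~ Poisson(λ(p)) is equal in distribution to γ(p)·ε + δ(p) for all p in the (non-degenerate) domain. -/
open MeasureTheory ProbabilityTheory Real
open scoped NNReal ENNReal


lemma pois_fac1 (r : ℝ≥0) :
    HasSum (fun n : ℕ => poissonPMFReal r n * n) (r : ℝ) := by
  have h0 := (poissonPMFRealSum r).mul_left (r : ℝ)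
  have hs : HasSum (fun n : ℕ => poissonPMFReal r (n + 1) * ((n : ℝ) + 1)) (r : ℝ) := by
    have := h0.congr_fun (g := fun n : ℕ => poissonPMFReal r (n + 1) * ((n : ℝ) + 1)) ?_
    · simpa using this
    · intro n
      simp only [poissonPMFReal, Nat.factorial_succ, Nat.cast_mul, Nat.cast_add, Nat.cast_one,
        pow_succ]
      have h1 : ((n : ℝ) + 1) ≠ 0 := by positivity
      have h2 : ((Nat.factorial n : ℝ)) ≠ 0 := by positivity
      field_simp
  have := (hasSum_nat_add_iff (f := fun n : ℕ => poissonPMFReal r n * n) 1).mp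
    (hs.congr_fun (by intro n; push_cast; ring))
  simpa using this

lemma pois_fac2 (r : ℝ≥0) :
    HasSum (fun n : ℕ => poissonPMFReal r n * (n * ((n : ℝ) - 1))) ((r : ℝ) ^ 2) := by
  have h0 := (poissonPMFRealSum r).mul_left ((r : ℝ) ^ 2)
  have hs : HasSum (fun n : ℕ => poissonPMFReal r (n + 2) * (((n : ℝ) + 2) * ((n : ℝ) + 1)))
      ((r : ℝ) ^ 2) := by
    have := h0.congr_fun
      (g := fun n : ℕ => poissonPMFReal r (n + 2) * (((n : ℝ) + 2) * ((n : ℝ) + 1))) ?_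
    · simpa using this
    · intro n
      simp only [poissonPMFReal, Nat.factorial_succ, Nat.cast_mul, Nat.cast_add, Nat.cast_one,
        Nat.cast_ofNat, pow_succ]
      have h1 : ((n : ℝ) + 1) ≠ 0 := by positivity
      have h1' : ((n : ℝ) + 1 + 1) ≠ 0 := by positivity
      have h2 : ((Nat.factorial n : ℝ)) ≠ 0 := by positivity
      field_simp
      ring
  have := (hasSum_nat_add_iff (f := fun n : ℕ => poissonPMFReal r n * (n * ((n : ℝ) - 1))) 2).mp
    (hs.congr_fun (by intro n; push_cast; ring))
  simpa [Finset.sum_range_succ] using this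

lemma pois_fac3 (r : ℝ≥0) :
    HasSum (fun n : ℕ => poissonPMFReal r n * (n * ((n : ℝ) - 1) * ((n : ℝ) - 2))) ((r : ℝ) ^ 3) := by
  have h0 := (poissonPMFRealSum r).mul_left ((r : ℝ) ^ 3)
  have hs : HasSum
      (fun n : ℕ => poissonPMFReal r (n + 3) * (((n : ℝ) + 3) * ((n : ℝ) + 2) * ((n : ℝ) + 1)))
      ((r : ℝ) ^ 3) := by
    have := h0.congr_fun
      (g := fun n : ℕ => poissonPMFReal r (n + 3) * (((n : ℝ) + 3) * ((n : ℝ) + 2) * ((n : ℝ) + 1))) ?_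
    · simpa using this
    · intro n
      simp only [poissonPMFReal, Nat.factorial_succ, Nat.cast_mul, Nat.cast_add, Nat.cast_one,
        Nat.cast_ofNat, pow_succ]
      have h1 : ((n : ℝ) + 1) ≠ 0 := by positivity
      have h1' : ((n : ℝ) + 1 + 1) ≠ 0 := by positivity
      have h1'' : ((n : ℝ) + 1 + 1 + 1) ≠ 0 := by positivity
      have h2 : ((Nat.factorial n : ℝ)) ≠ 0 := by positivity
      field_simp
      ring
  have := (hasSum_nat_add_iff
      (f := fun n : ℕ => poissonPMFReal r n * (n * ((n : ℝ) - 1) * ((n : ℝ) - 2))) 3).mp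
    (hs.congr_fun (by intro n; push_cast; ring))
  simpa [Finset.sum_range_succ] using this

/-- weighted polynomial sum under the Poisson pmf -/
lemma pois_poly (r : ℝ≥0) (a b c d : ℝ) :
    HasSum (fun n : ℕ => poissonPMFReal r n * (a + b * n + c * (n : ℝ) ^ 2 + d * (n : ℝ) ^ 3))
      (a + b * r + c * ((r : ℝ) + (r : ℝ) ^ 2) + d * ((r : ℝ) + 3 * (r : ℝ) ^ 2 + (r : ℝ) ^ 3)) := by
  have h0 := (poissonPMFRealSum r).mul_left a
  have h1 := (pois_fac1 r).mul_left (b + c + d)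
  have h2 := (pois_fac2 r).mul_left (c + 3 * d)
  have h3 := (pois_fac3 r).mul_left d
  have hsum := (((h0.add h1).add h2).add h3).congr_fun
    (g := fun n : ℕ => poissonPMFReal r n * (a + b * n + c * (n : ℝ) ^ 2 + d * (n : ℝ) ^ 3))
    (fun n => by simp only [poissonPMFReal]; push_cast; ring)
  rw [show (a + b * (r : ℝ) + c * ((r : ℝ) + (r : ℝ) ^ 2)
      + d * ((r : ℝ) + 3 * (r : ℝ) ^ 2 + (r : ℝ) ^ 3))
    = (a * 1 + (b + c + d) * (r : ℝ) + (c + 3 * d) * (r : ℝ) ^ 2 + d * (r : ℝ) ^ 3) from by ring]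
  exact hsum

lemma le_one_add_cube (x : ℝ) (hx : 0 ≤ x) : x ≤ 1 + x ^ 3 := by nlinarith [sq_nonneg x, sq_nonneg (x-1), sq_nonneg (x+1)]
lemma sq_le_one_add_cube (x : ℝ) (hx : 0 ≤ x) : x ^ 2 ≤ 1 + x ^ 3 := by nlinarith [sq_nonneg x, sq_nonneg (x-1), sq_nonneg (x+1)]

lemma pois_integrable (r : ℝ≥0) (f : ℕ → ℝ) (C : ℝ)
    (hC : ∀ n : ℕ, |f n| ≤ C * (1 + (n : ℝ) ^ 3)) :
    Integrable f (poissonMeasure r) := by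
  have hC0 : 0 ≤ C := by have := (abs_nonneg (f 0)).trans (hC 0); simpa using this
  have hsum : Summable (fun n : ℕ => poissonPMFReal r n * (C + 0 * n + 0 * (n:ℝ)^2 + C * (n:ℝ)^3)) :=
    (pois_poly r C 0 0 C).summable
  have hsum' : Summable (fun n : ℕ => C * (1 + (n : ℝ) ^ 3) * poissonPMFReal r n) :=
    hsum.congr (fun n => by ring)
  refine ⟨(measurable_from_top (f := f)).aestronglyMeasurable, ?_⟩
  simp only [HasFiniteIntegral, lintegral_countable']
  have hb : ∀ n : ℕ, (‖f n‖₊ : ℝ≥0∞) * poissonMeasure r {n}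
      ≤ ENNReal.ofReal (C * (1 + (n : ℝ) ^ 3) * poissonPMFReal r n) := by
    intro n
    rw [poissonMeasure_singleton]
    show (‖f n‖₊ : ℝ≥0∞) * ENNReal.ofReal (poissonPMFReal r n) ≤ _
    rw [← ENNReal.ofReal_coe_nnreal, ← ENNReal.ofReal_mul (NNReal.coe_nonneg _)]
    apply ENNReal.ofReal_le_ofReal
    have : (‖f n‖₊ : ℝ) = |f n| := by simp [Real.norm_eq_abs]
    rw [this]
    exact mul_le_mul_of_nonneg_right (hC n) poissonPMFReal_nonneg
  calc ∑' n : ℕ, (‖f n‖₊ : ℝ≥0∞) * poissonMeasure r {n}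
      ≤ ∑' n : ℕ, ENNReal.ofReal (C * (1 + (n : ℝ) ^ 3) * poissonPMFReal r n) :=
        ENNReal.tsum_le_tsum hb
    _ = ENNReal.ofReal (∑' n : ℕ, C * (1 + (n : ℝ) ^ 3) * poissonPMFReal r n) :=
        (ENNReal.ofReal_tsum_of_nonneg (fun n => mul_nonneg (mul_nonneg hC0 (by positivity)) poissonPMFReal_nonneg) hsum').symm
    _ < ⊤ := ENNReal.ofReal_lt_top

lemma pois_integral_poly (r : ℝ≥0) (a b c d : ℝ) :
    ∫ n : ℕ, (a + b * n + c * (n : ℝ) ^ 2 + d * (n : ℝ) ^ 3) ∂(poissonMeasure r)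
      = a + b * r + c * ((r : ℝ) + (r : ℝ) ^ 2) + d * ((r : ℝ) + 3 * (r : ℝ) ^ 2 + (r : ℝ) ^ 3) := by
  have hint : Integrable (fun n : ℕ => a + b * n + c * (n : ℝ) ^ 2 + d * (n : ℝ) ^ 3)
      (poissonMeasure r) := by
    apply pois_integrable r _ (|a| + |b| + |c| + |d|)
    intro n
    have hn : (0:ℝ) ≤ n := Nat.cast_nonneg n
    have h1 := le_one_add_cube (n : ℝ) hn
    have h2 := sq_le_one_add_cube (n : ℝ) hn
    have h3 : (n:ℝ)^3 ≤ 1 + (n:ℝ)^3 := by linarith [pow_nonneg hn 3]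
    calc |a + b * n + c * (n : ℝ) ^ 2 + d * (n : ℝ) ^ 3|
        ≤ |a| + |b| * n + |c| * (n:ℝ)^2 + |d| * (n:ℝ)^3 := by
          have e1 := abs_add_le (a + b * (n:ℝ) + c * (n:ℝ)^2) (d * (n:ℝ)^3)
          have e2 := abs_add_le (a + b * (n:ℝ)) (c * (n:ℝ)^2)
          have e3 := abs_add_le a (b * (n:ℝ))
          have m1 : |b * (n:ℝ)| = |b| * n := by
            rw [abs_mul, abs_of_nonneg hn]
          have m2 : |c * (n:ℝ)^2| = |c| * (n:ℝ)^2 := by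
            rw [abs_mul, abs_of_nonneg (pow_nonneg hn 2)]
          have m3 : |d * (n:ℝ)^3| = |d| * (n:ℝ)^3 := by
            rw [abs_mul, abs_of_nonneg (pow_nonneg hn 3)]
          linarith
      _ ≤ (|a| + |b| + |c| + |d|) * (1 + (n : ℝ) ^ 3) := by
          have ha := abs_nonneg a; have hb' := abs_nonneg b
          have hc := abs_nonneg c; have hd := abs_nonneg d
          nlinarith [pow_nonneg hn 3]
  refine (hasSum_integral_poissonMeasure hint).unique ?_
  simp only [smul_eq_mul]
  exact pois_poly r a b c d

lemma pois_map_integral (r : ℝ≥0) (a b c d : ℝ) :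
    ∫ y : ℝ, (a + b * y + c * y ^ 2 + d * y ^ 3)
        ∂(Measure.map (Nat.cast : ℕ → ℝ) (poissonMeasure r))
      = a + b * r + c * ((r : ℝ) + (r : ℝ) ^ 2) + d * ((r : ℝ) + 3 * (r : ℝ) ^ 2 + (r : ℝ) ^ 3) := by
  rw [integral_map (measurable_from_top (f := (Nat.cast : ℕ → ℝ))).aemeasurable
    (f := fun y : ℝ => a + b * y + c * y ^ 2 + d * y ^ 3)
    (Measurable.aestronglyMeasurable (by fun_prop))]
  exact pois_integral_poly r a b c d

/-- A Poisson-distributed demand with non-constant price-dependent mean cannot be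
written in the additive-multiplicative form `γ(p)·ε + δ(p)` with `ε` independent
of the price: for every probability space and random variable `ε` with finite
third moment, nonzero variance and nonzero third central moment, there are no
functions `γ, δ` such that `γ(p)·ε + δ(p)` has the Poisson distribution with
mean `λ(p)` for all `p` in the domain, when `λ` is non-constant there. -/
theorem poisson_not_additive_multiplicative
    {Ω : Type*} [MeasurableSpace Ω] (μ : Measure Ω) [IsProbabilityMeasure μ]
    (ε : Ω → ℝ) (hmeas : Measurable ε)
    (hmom : Integrable (fun ω => |ε ω| ^ 3) μ)
    (hvar : variance ε μ ≠ 0)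
    (hthird : (∫ ω, (ε ω - ∫ ω', ε ω' ∂μ) ^ 3 ∂μ) ≠ 0)
    (lam : ℝ → ℝ) (S : Set ℝ) (hpos : ∀ p ∈ S, 0 < lam p)
    (hnonconst : ∃ p ∈ S, ∃ q ∈ S, lam p ≠ lam q) :
    ¬ ∃ γ δ : ℝ → ℝ, ∀ p ∈ S,
        Measure.map (fun ω => γ p * ε ω + δ p) μ =
          Measure.map (Nat.cast : ℕ → ℝ) (poissonMeasure (lam p).toNNReal) := by
  rintro ⟨γ, δ, hmap⟩
  set m : ℝ := ∫ ω', ε ω' ∂μ with hm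
  set v : ℝ := variance ε μ with hv
  set t : ℝ := ∫ ω, (ε ω - m) ^ 3 ∂μ with ht
  -- integrability facts
  have hdom : Integrable (fun ω => 1 + |ε ω| ^ 3) μ := (integrable_const 1).add hmom
  have hint1 : Integrable ε μ := by
    refine hdom.mono' hmeas.aestronglyMeasurable (ae_of_all _ fun ω => ?_)
    rw [Real.norm_eq_abs]
    simpa using le_one_add_cube |ε ω| (abs_nonneg _)
  have hint2 : Integrable (fun ω => ε ω ^ 2) μ := by
    refine hdom.mono' (hmeas.pow_const 2).aestronglyMeasurable (ae_of_all _ fun ω => ?_)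
    rw [Real.norm_eq_abs, abs_pow]
    exact sq_le_one_add_cube _ (abs_nonneg _)
  have hmem2 : MemLp ε 2 μ := by
    rw [memLp_two_iff_integrable_sq hmeas.aestronglyMeasurable]
    exact hint2
  have hvv : v = ∫ ω, (ε ω - m) ^ 2 ∂μ := by
    rw [hv, variance_eq_integral hmeas.aemeasurable]
  -- per-point equations
  have key : ∀ p ∈ S, γ p ^ 2 * v = lam p ∧ γ p ^ 3 * t = lam p := by
    intro p hp
    have hx : (((lam p).toNNReal : ℝ)) = lam p := Real.coe_toNNReal _ (hpos p hp).le
    set L := lam p with hL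
    have hf : Measurable fun ω => γ p * ε ω + δ p := (hmeas.const_mul _).add_const _
    -- first moment
    have e1R : ∫ y : ℝ, ((0:ℝ) + 1 * y + 0 * y ^ 2 + 0 * y ^ 3)
        ∂(Measure.map (Nat.cast : ℕ → ℝ) (poissonMeasure (lam p).toNNReal)) = L := by
      rw [pois_map_integral, hx]; ring
    have e1L : ∫ y : ℝ, ((0:ℝ) + 1 * y + 0 * y ^ 2 + 0 * y ^ 3)
        ∂(Measure.map (fun ω => γ p * ε ω + δ p) μ) = γ p * m + δ p := by
      rw [integral_map hf.aemeasurable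
        (f := fun y : ℝ => (0:ℝ) + 1 * y + 0 * y ^ 2 + 0 * y ^ 3)
        (Measurable.aestronglyMeasurable (by fun_prop))]
      simp only [zero_mul, one_mul, mul_zero, zero_add, add_zero]
      rw [integral_add (hint1.const_mul _) (integrable_const _), integral_const_mul,
        integral_const]
      simp [hm]
    have E1 : γ p * m + δ p = L := by rw [← e1L, hmap p hp, e1R]
    have hδ : δ p = L - γ p * m := by linarith
    -- second central moment
    have e2R : ∫ y : ℝ, (L ^ 2 + (-(2 * L)) * y + 1 * y ^ 2 + 0 * y ^ 3)
        ∂(Measure.map (Nat.cast : ℕ → ℝ) (poissonMeasure (lam p).toNNReal)) = L := by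
      rw [pois_map_integral, hx]; ring
    have e2L : ∫ y : ℝ, (L ^ 2 + (-(2 * L)) * y + 1 * y ^ 2 + 0 * y ^ 3)
        ∂(Measure.map (fun ω => γ p * ε ω + δ p) μ) = γ p ^ 2 * v := by
      rw [integral_map hf.aemeasurable
        (f := fun y : ℝ => L ^ 2 + (-(2 * L)) * y + 1 * y ^ 2 + 0 * y ^ 3)
        (Measurable.aestronglyMeasurable (by fun_prop))]
      have : (fun ω => L ^ 2 + (-(2 * L)) * (γ p * ε ω + δ p) + 1 * (γ p * ε ω + δ p) ^ 2
          + 0 * (γ p * ε ω + δ p) ^ 3) = fun ω => γ p ^ 2 * (ε ω - m) ^ 2 := by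
        funext ω; rw [hδ]; ring
      rw [this, integral_const_mul, ← hvv]
    have E2 : γ p ^ 2 * v = L := by rw [← e2L, hmap p hp, e2R]
    -- third central moment
    have e3R : ∫ y : ℝ, ((-(L ^ 3)) + (3 * L ^ 2) * y + (-(3 * L)) * y ^ 2 + 1 * y ^ 3)
        ∂(Measure.map (Nat.cast : ℕ → ℝ) (poissonMeasure (lam p).toNNReal)) = L := by
      rw [pois_map_integral, hx]; ring
    have e3L : ∫ y : ℝ, ((-(L ^ 3)) + (3 * L ^ 2) * y + (-(3 * L)) * y ^ 2 + 1 * y ^ 3)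
        ∂(Measure.map (fun ω => γ p * ε ω + δ p) μ) = γ p ^ 3 * t := by
      rw [integral_map hf.aemeasurable
        (f := fun y : ℝ => (-(L ^ 3)) + (3 * L ^ 2) * y + (-(3 * L)) * y ^ 2 + 1 * y ^ 3)
        (Measurable.aestronglyMeasurable (by fun_prop))]
      have : (fun ω => (-(L ^ 3)) + (3 * L ^ 2) * (γ p * ε ω + δ p)
          + (-(3 * L)) * (γ p * ε ω + δ p) ^ 2 + 1 * (γ p * ε ω + δ p) ^ 3)
          = fun ω => γ p ^ 3 * (ε ω - m) ^ 3 := by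
        funext ω; rw [hδ]; ring
      rw [this, integral_const_mul, ← ht]
    have E3 : γ p ^ 3 * t = L := by rw [← e3L, hmap p hp, e3R]
    exact ⟨E2, E3⟩
  -- derive constancy of lam
  have hconst : ∀ p ∈ S, lam p = (v / t) ^ 2 * v := by
    intro p hp
    obtain ⟨E2, E3⟩ := key p hp
    have hγ0 : γ p ≠ 0 := by
      intro h0
      rw [h0] at E2
      simp at E2
      exact absurd E2.symm (hpos p hp).ne'
    have hgt : γ p * t = v := by
      have e : γ p ^ 2 * (γ p * t) = γ p ^ 2 * v := by
        rw [show γ p ^ 2 * (γ p * t) = γ p ^ 3 * t from by ring, E3, ← E2]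
      exact mul_left_cancel₀ (pow_ne_zero 2 hγ0) e
    have hγ : γ p = v / t := by
      field_simp [ht] at hgt ⊢
      linarith [hgt]
    rw [← E2, hγ]
  obtain ⟨p, hp, q, hq, hne⟩ := hnonconst
  exact hne ((hconst p hp).trans (hconst q hq).symm)
end

section
/- For a Poisson random variable X with mean λ and any real x ≥ 0 with n = ⌊x⌋, the truncated sum Σ_{k=0}^{n} (λ^{k-2} e^{-λ}/k!)·(x−k)·((k−λ)² − k) is nonnegative. -/
open Finset

/-- The Poisson probability mass function with rate `l`. -/
noncomputable def pois (l : ℝ) (k : ℕ) : ℝ := l ^ k * Real.exp (-l) / (Nat.factorial k)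

lemma trunc_sum_closed (lam x : ℝ) (hlam : 0 < lam) (n : ℕ) :
    ∑ k ∈ Finset.range (n + 1),
      pois lam k / lam ^ 2 * ((x - k) * (((k : ℝ) - lam) ^ 2 - k)) =
    lam ^ n * Real.exp (-lam) / (lam * (Nat.factorial n)) *
      ((n : ℝ) * ((n : ℝ) + 1 - x) + lam * (x - n)) := by
  induction n with
  | zero =>
      simp only [zero_add, Finset.sum_range_one, pois, Nat.factorial_zero, Nat.cast_zero, Nat.cast_one,
        pow_zero]
      field_simp
      ring
  | succ n ih =>
      rw [Finset.sum_range_succ, ih]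
      simp only [pois, Nat.factorial_succ, Nat.cast_succ, Nat.cast_mul]
      have hf : ((Nat.factorial n : ℝ)) ≠ 0 := by
        exact_mod_cast (Nat.factorial_pos n).ne'
      have hn1 : ((n : ℝ) + 1) ≠ 0 := by positivity
      field_simp
      ring

/-- For `X ~ Poisson(λ)` and real `x ≥ 0` with `n = ⌊x⌋`, the truncated sum
`∑_{k=0}^{n} (λ^{k-2} e^{-λ}/k!)·(x−k)·((k−λ)² − k)` is nonnegative. -/
theorem truncated_poisson_second_term_nonneg
    (lam x : ℝ) (hlam : 0 < lam) (hx : 0 ≤ x) :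
    0 ≤ ∑ k ∈ Finset.range (Nat.floor x + 1),
      pois lam k / lam ^ 2 * ((x - k) * (((k : ℝ) - lam) ^ 2 - k)) := by
  rw [trunc_sum_closed lam x hlam (Nat.floor x)]
  set n := Nat.floor x with hn
  have h1 : (n : ℝ) ≤ x := Nat.floor_le hx
  have h2 : x < (n : ℝ) + 1 := Nat.lt_floor_add_one x
  have hb : 0 ≤ (n : ℝ) * ((n : ℝ) + 1 - x) + lam * (x - n) := by
    have : (0:ℝ) ≤ (n : ℝ) := Nat.cast_nonneg n
    nlinarith
  have hc : 0 ≤ lam ^ n * Real.exp (-lam) / (lam * (Nat.factorial n)) := by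
    positivity
  exact mul_nonneg hc hb
end

section
/- The expected inventory function I(p,x) = E[(x−d)⁺] with d ~ Poisson(λ(p)) has strictly positive mixed partial derivative ∂²I/(∂x∂p) at points where x is not an integer, and hence is neither jointly convex nor jointly concave in (p, x). -/
open Finset

lemma lam_hasDeriv (eta Delta l a p : ℝ) :
    HasDerivAt (fun q => eta * Delta * Real.exp (l*q+a) / (1 + Real.exp (l*q+a)))
      (eta * Delta * (l * Real.exp (l*p+a)) / (1 + Real.exp (l*p+a))^2) p := by
  have hu : HasDerivAt (fun q : ℝ => l*q+a) l p := by
    simpa using ((hasDerivAt_id p).const_mul l).add_const a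
  have he : HasDerivAt (fun q : ℝ => Real.exp (l*q+a)) (Real.exp (l*p+a) * l) p := hu.exp
  have hden : (1 : ℝ) + Real.exp (l*p+a) ≠ 0 := by positivity
  have := ((he.const_mul (eta*Delta)).fun_div ((he.const_add 1)) hden)
  refine this.congr_deriv ?_
  field_simp
  ring

lemma pois_sum_hasDeriv (n : ℕ) (t : ℝ) :
    HasDerivAt (fun s : ℝ => ∑ k ∈ Finset.range (n+1), s ^ k * Real.exp (-s) / (Nat.factorial k))
      (-(t ^ n * Real.exp (-t) / (Nat.factorial n))) t := by
  induction n with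
  | zero =>
      simp only [Finset.sum_range_one, pow_zero, one_mul, Nat.factorial_zero, Nat.cast_one,
        div_one]
      simpa using (hasDerivAt_neg t).exp
  | succ n ih =>
      have hterm : HasDerivAt (fun s : ℝ => s ^ (n+1) * Real.exp (-s) / (Nat.factorial (n+1)))
          (((n+1 : ℕ) * t ^ n * Real.exp (-t) + t ^ (n+1) * (Real.exp (-t) * -1)) /
            (Nat.factorial (n+1))) t := by
        exact ((hasDerivAt_pow (n+1) t).mul ((hasDerivAt_neg t).exp)).div_const _
      have := ih.fun_add hterm
      have heq : (fun s : ℝ => ∑ k ∈ Finset.range (n+1+1), s ^ k * Real.exp (-s) / (Nat.factorial k))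
          = fun s : ℝ => (∑ k ∈ Finset.range (n+1), s ^ k * Real.exp (-s) / (Nat.factorial k))
            + s ^ (n+1) * Real.exp (-s) / (Nat.factorial (n+1)) := by
        funext s; rw [Finset.sum_range_succ]
      rw [heq]
      refine this.congr_deriv ?_
      have h1 : (Nat.factorial (n+1) : ℝ) = (n+1) * Nat.factorial n := by
        rw [Nat.factorial_succ]; push_cast; ring
      have h2 : (Nat.factorial n : ℝ) ≠ 0 := Nat.cast_ne_zero.2 (Nat.factorial_ne_zero n)
      have h3 : (n+1 : ℝ) ≠ 0 := by positivity
      rw [h1]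
      field_simp
      push_cast
      ring

lemma lam_anti (eta Delta l a : ℝ) (heta : 0 < eta) (hD : 0 < Delta) (hl : l < 0)
    {p q : ℝ} (hpq : p < q) :
    eta*Delta*Real.exp (l*q+a)/(1+Real.exp (l*q+a)) <
      eta*Delta*Real.exp (l*p+a)/(1+Real.exp (l*p+a)) := by
  set x := Real.exp (l*q+a) with hx
  set y := Real.exp (l*p+a) with hy
  have hxy : x < y := Real.exp_lt_exp.2 (by nlinarith)
  have hx0 : 0 < x := Real.exp_pos _
  have hy0 : 0 < y := Real.exp_pos _
  rw [div_lt_div_iff₀ (by positivity) (by positivity)]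
  have h1 : eta * Delta * x < eta * Delta * y := mul_lt_mul_of_pos_left hxy (mul_pos heta hD)
  nlinarith [mul_pos (mul_pos heta hD) hx0, mul_pos (mul_pos heta hD) hy0]

lemma inner_deriv (c : ℕ → ℝ) (n : ℕ) (x : ℝ)
    (I : ℝ → ℝ) (hIx : ∀ y ∈ Set.Ioo (n : ℝ) (n+1), I y = ∑ k ∈ Finset.range (n+1), c k * (y - k))
    (hx : x ∈ Set.Ioo (n : ℝ) (n+1)) :
    deriv I x = ∑ k ∈ Finset.range (n+1), c k := by
  have hev : I =ᶠ[nhds x] (fun y => ∑ k ∈ Finset.range (n+1), c k * (y - k)) := by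
    filter_upwards [Ioo_mem_nhds hx.1 hx.2] with y hy using hIx y hy
  rw [hev.deriv_eq]
  have : HasDerivAt (fun y : ℝ => ∑ k ∈ Finset.range (n+1), c k * (y - k))
      (∑ k ∈ Finset.range (n+1), c k) x := by
    apply HasDerivAt.fun_sum
    intro k hk
    simpa using ((hasDerivAt_id x).sub_const (k : ℝ)).const_mul (c k)
  exact this.deriv

/-- The expected inventory `I(p,x) = E[(x−d)⁺]` with `d ~ Poisson(λ(p))`, where
`λ(p) = ηΔ·e^{lp+a}/(1+e^{lp+a})`, `l < 0`, `lp+a > 0` on a bounded price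
domain, has strictly positive mixed partial `∂²I/(∂x∂p)` at points where `x`
is not an integer, and the function is neither jointly convex nor jointly
concave on the domain. -/
theorem inventory_mixed_partial_pos_not_jointly_convex_concave
    (eta Delta l a : ℝ) (heta : 0 < eta) (hDelta : Delta ∈ Set.Ioc (0:ℝ) 1)
    (hl : l < 0)
    (S : Set ℝ) (hbdd : Bornology.IsBounded S) (hdom : ∀ p ∈ S, 0 < l * p + a)
    (hSconv : Convex ℝ S) (hSint : (interior S).Nonempty)
    (lam : ℝ → ℝ)
    (hlam : ∀ p, lam p = eta * Delta * Real.exp (l * p + a) / (1 + Real.exp (l * p + a)))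
    (I : ℝ → ℝ → ℝ)
    (hI : ∀ p y, I p y = ∑ k ∈ Finset.range (Nat.floor y + 1), pois (lam p) k * (y - k)) :
    (∀ p ∈ S, ∀ x : ℝ, 0 < x → (∀ n : ℕ, x ≠ n) →
      0 < deriv (fun q => deriv (fun y => I q y) x) p) ∧
    ¬ ConvexOn ℝ (S ×ˢ Set.Ici (0:ℝ)) (fun q : ℝ × ℝ => I q.1 q.2) ∧
    ¬ ConcaveOn ℝ (S ×ˢ Set.Ici (0:ℝ)) (fun q : ℝ × ℝ => I q.1 q.2) := by
  obtain ⟨hD0, hD1⟩ := hDelta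
  have hlamF : lam = fun q => eta * Delta * Real.exp (l*q+a) / (1 + Real.exp (l*q+a)) :=
    funext hlam
  subst hlamF
  set lam : ℝ → ℝ := fun q => eta * Delta * Real.exp (l*q+a) / (1 + Real.exp (l*q+a)) with hlamdef
  have hlampos : ∀ q, 0 < lam q := by
    intro q; rw [hlamdef]; positivity
  -- Part 1
  have part1 : ∀ p ∈ S, ∀ x : ℝ, 0 < x → (∀ n : ℕ, x ≠ n) →
      0 < deriv (fun q => deriv (fun y => I q y) x) p := by
    intro p _ x hx0 hxn
    set n := Nat.floor x with hn
    have hxIoo : x ∈ Set.Ioo (n : ℝ) (n+1) := by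
      constructor
      · exact lt_of_le_of_ne (Nat.floor_le hx0.le) (Ne.symm (hxn n))
      · exact Nat.lt_floor_add_one x
    have hfun : (fun q => deriv (fun y => I q y) x)
        = fun q => ∑ k ∈ Finset.range (n+1), pois (lam q) k := by
      funext q
      apply inner_deriv (pois (lam q)) n x _ _ hxIoo
      intro y hy
      have hy0 : (0:ℝ) ≤ y := le_trans (Nat.cast_nonneg n) hy.1.le
      have hfl : Nat.floor y = n := by
        rw [Nat.floor_eq_iff hy0]
        exact ⟨hy.1.le, hy.2⟩
      rw [hI, hfl]
    rw [hfun]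
    have hcomp : HasDerivAt (fun q => ∑ k ∈ Finset.range (n+1), pois (lam q) k)
        (-((lam p) ^ n * Real.exp (-(lam p)) / (Nat.factorial n)) *
          (eta * Delta * (l * Real.exp (l*p+a)) / (1 + Real.exp (l*p+a))^2)) p := by
      have h := HasDerivAt.comp (𝕜 := ℝ) p (pois_sum_hasDeriv n (lam p))
        (lam_hasDeriv eta Delta l a p)
      exact h
    rw [hcomp.deriv]
    apply mul_pos_of_neg_of_neg
    · have hlp := hlampos p
      have : 0 < (lam p) ^ n * Real.exp (-(lam p)) / (Nat.factorial n) := by positivity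
      linarith
    · apply div_neg_of_neg_of_pos
      · have he := Real.exp_pos (l*p+a)
        have : l * Real.exp (l*p+a) < 0 := mul_neg_of_neg_of_pos hl he
        nlinarith [mul_pos heta hD0]
      · positivity
  -- common setup for parts 2 and 3
  obtain ⟨p0, hp0⟩ := hSint
  obtain ⟨ε, hε, hball⟩ := Metric.isOpen_iff.1 isOpen_interior p0 hp0
  have hS0 : p0 ∈ S := interior_subset hp0
  have hS1 : p0 - ε/2 ∈ S := by
    apply interior_subset; apply hball
    rw [Metric.mem_ball, Real.dist_eq, abs_of_nonpos (by linarith)]; linarith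
  have hS2 : p0 + ε/2 ∈ S := by
    apply interior_subset; apply hball
    rw [Metric.mem_ball, Real.dist_eq, abs_of_nonneg (by linarith)]; linarith
  have hlam1 : lam p0 < lam (p0 - ε/2) :=
    lam_anti eta Delta l a heta hD0 hl (by linarith)
  have hlam2 : lam (p0 + ε/2) < lam p0 :=
    lam_anti eta Delta l a heta hD0 hl (by linarith)
  have hfl14 : Nat.floor ((1:ℝ)/4) = 0 := by rw [Nat.floor_eq_zero]; norm_num
  have hfl12 : Nat.floor ((1:ℝ)/2) = 0 := by rw [Nat.floor_eq_zero]; norm_num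
  have hfl0 : Nat.floor ((0:ℝ)) = 0 := by norm_num
  have hI14 : ∀ q, I q (1/4) = Real.exp (-(lam q)) * (1/4) := by
    intro q; rw [hI, hfl14]; simp [pois]
  have hI12 : ∀ q, I q (1/2) = Real.exp (-(lam q)) * (1/2) := by
    intro q; rw [hI, hfl12]; simp [pois]
  have hI0 : ∀ q, I q 0 = 0 := by
    intro q; rw [hI, hfl0]; simp [pois]
  refine ⟨part1, ?_, ?_⟩
  · -- ¬ ConvexOn : use (p1, 1/2) and (p2, 0)
    intro hconv
    have key := hconv.2 (show ((p0 - ε/2, (1/2:ℝ)) : ℝ × ℝ) ∈ S ×ˢ Set.Ici (0:ℝ) from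
        ⟨hS1, by norm_num⟩)
      (show ((p0 + ε/2, (0:ℝ)) : ℝ × ℝ) ∈ S ×ˢ Set.Ici (0:ℝ) from
        ⟨hS2, Set.mem_Ici.2 le_rfl⟩)
      (show (0:ℝ) ≤ 1/2 by norm_num) (show (0:ℝ) ≤ 1/2 by norm_num)
      (show (1/2:ℝ) + 1/2 = 1 by norm_num)
    have hpt : (1/2 : ℝ) • ((p0 - ε/2, (1/2:ℝ)) : ℝ × ℝ)
        + (1/2 : ℝ) • ((p0 + ε/2, (0:ℝ)) : ℝ × ℝ) = (p0, (1/4:ℝ)) := by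
      simp [Prod.ext_iff]; constructor <;> ring
    rw [hpt] at key
    simp only [smul_eq_mul] at key
    rw [hI14, hI12, hI0] at key
    have hle : Real.exp (-(lam p0)) ≤ Real.exp (-(lam (p0 - ε/2))) := by linarith
    rw [Real.exp_le_exp] at hle
    linarith
  · -- ¬ ConcaveOn : use (p1, 0) and (p2, 1/2)
    intro hconc
    have key := hconc.2 (show ((p0 - ε/2, (0:ℝ)) : ℝ × ℝ) ∈ S ×ˢ Set.Ici (0:ℝ) from
        ⟨hS1, Set.mem_Ici.2 le_rfl⟩)
      (show ((p0 + ε/2, (1/2:ℝ)) : ℝ × ℝ) ∈ S ×ˢ Set.Ici (0:ℝ) from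
        ⟨hS2, by norm_num⟩)
      (show (0:ℝ) ≤ 1/2 by norm_num) (show (0:ℝ) ≤ 1/2 by norm_num)
      (show (1/2:ℝ) + 1/2 = 1 by norm_num)
    have hpt : (1/2 : ℝ) • ((p0 - ε/2, (0:ℝ)) : ℝ × ℝ)
        + (1/2 : ℝ) • ((p0 + ε/2, (1/2:ℝ)) : ℝ × ℝ) = (p0, (1/4:ℝ)) := by
      simp [Prod.ext_iff]; constructor <;> ring
    rw [hpt] at key
    simp only [smul_eq_mul] at key
    rw [hI14, hI12, hI0] at key
    have hle : Real.exp (-(lam (p0 + ε/2))) ≤ Real.exp (-(lam p0)) := by linarith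
    rw [Real.exp_le_exp] at hle
    linarith
end

section
/- The likelihood-ratio gradient estimator for price is unbiased: ∂F/∂p = E[min(d,x)] + p·E[(∂ log P(d)/∂p)·min(d,x)] − (h+b)·E[(∂ log P(d)/∂p)·(x−d)⁺] − b·∂λ/∂p, where ∂ log P(d)/∂p = (d/λ − 1)·∂λ/∂p for d ~ Poisson(λ(p)). -/
/-- Derivative of each term of the Poisson expectation series. -/
lemma pois_term_hasDerivAt (g : ℕ → ℝ) (k : ℕ) (t : ℝ) :
    HasDerivAt (fun s => pois s k * g k)
      (((k : ℝ) * t ^ (k - 1) - t ^ k) * Real.exp (-t) / (Nat.factorial k) * g k) t := by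
  have h1 : HasDerivAt (fun s : ℝ => Real.exp (-s)) (-Real.exp (-t)) t := by
    simpa [Function.comp_def] using (Real.hasDerivAt_exp (-t)).comp t (hasDerivAt_neg t)
  have h2 : HasDerivAt (fun s : ℝ => s ^ k) ((k : ℝ) * t ^ (k - 1)) t := hasDerivAt_pow k t
  have hfun : (fun s => pois s k * g k)
      = fun s => s ^ k * Real.exp (-s) * (g k / (Nat.factorial k : ℝ)) := by
    funext s; unfold pois; ring
  rw [hfun]
  have h3 := (h2.mul h1).mul_const (g k / (Nat.factorial k : ℝ))
  refine h3.congr_deriv ?_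
  ring

lemma exp_neg_le_one {t : ℝ} (ht : 0 ≤ t) : Real.exp (-t) ≤ 1 := by
  rw [← Real.exp_zero]
  exact Real.exp_le_exp.mpr (by linarith)

/-- Differentiation under the sum for the Poisson expectation of a bounded function. -/
lemma pois_tsum_hasDerivAt (g : ℕ → ℝ) (C : ℝ) (hg : ∀ k, |g k| ≤ C)
    {l : ℝ} (hl : 0 < l) :
    HasDerivAt (fun t => ∑' k : ℕ, pois t k * g k)
      (∑' k : ℕ, pois l k * ((k : ℝ) / l - 1) * g k) l := by
  have hC : 0 ≤ C := le_trans (abs_nonneg _) (hg 0)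
  set f' : ℕ → ℝ → ℝ := fun k t =>
    ((k : ℝ) * t ^ (k - 1) - t ^ k) * Real.exp (-t) / (Nat.factorial k) * g k with hf'
  set u : ℕ → ℝ := fun k => C * ((2 * (l + 1)) ^ k / (Nat.factorial k)) with hu
  have hus : Summable u := (Real.summable_pow_div_factorial (2 * (l + 1))).mul_left C
  have key : HasDerivAt (fun t => ∑' k : ℕ, pois t k * g k) (∑' k : ℕ, f' k l) l := by
    apply hasDerivAt_tsum_of_isPreconnected hus isOpen_Ioo
      (isPreconnected_Ioo (a := (0 : ℝ)) (b := l + 1))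
      (fun k y _ => pois_term_hasDerivAt g k y) ?_ (y₀ := l) ⟨hl, by linarith⟩ ?_
      ⟨hl, by linarith⟩
    · rintro k y ⟨hy0, hy1⟩
      have hy0' : (0 : ℝ) ≤ y := le_of_lt hy0
      have hy1' : y ≤ l + 1 := le_of_lt hy1
      have hl1 : (1 : ℝ) ≤ l + 1 := by linarith
      have hb1 : y ^ (k - 1) ≤ (l + 1) ^ k :=
        le_trans (pow_le_pow_left₀ hy0' hy1' _) (pow_le_pow_right₀ hl1 (Nat.sub_le k 1))
      have hb2 : y ^ k ≤ (l + 1) ^ k := pow_le_pow_left₀ hy0' hy1' _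
      have habs : |(k : ℝ) * y ^ (k - 1) - y ^ k| ≤ ((k : ℝ) + 1) * (l + 1) ^ k := by
        have h1 : |(k : ℝ) * y ^ (k - 1) - y ^ k| ≤ (k : ℝ) * y ^ (k - 1) + y ^ k := by
          calc |(k : ℝ) * y ^ (k - 1) - y ^ k| ≤ |(k : ℝ) * y ^ (k - 1)| + |y ^ k| :=
                abs_sub _ _
            _ = (k : ℝ) * y ^ (k - 1) + y ^ k := by
                rw [abs_of_nonneg (by positivity), abs_of_nonneg (by positivity)]
        calc |(k : ℝ) * y ^ (k - 1) - y ^ k| ≤ (k : ℝ) * y ^ (k - 1) + y ^ k := h1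
          _ ≤ (k : ℝ) * (l + 1) ^ k + (l + 1) ^ k := by
              gcongr
          _ = ((k : ℝ) + 1) * (l + 1) ^ k := by ring
      have hk2 : ((k : ℝ) + 1) ≤ 2 ^ k := by
        have := @Nat.lt_two_pow_self k
        push_cast
        exact_mod_cast Nat.succ_le_of_lt this
      have hexp : Real.exp (-y) ≤ 1 := exp_neg_le_one hy0'
      simp only [Real.norm_eq_abs]
      rw [abs_mul, abs_div, abs_mul]
      rw [abs_of_pos (show (0:ℝ) < (Nat.factorial k : ℝ) by positivity),
        abs_of_pos (Real.exp_pos _)]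
      have step1 : |(k : ℝ) * y ^ (k - 1) - y ^ k| * Real.exp (-y) / (Nat.factorial k) * |g k|
          ≤ (((k : ℝ) + 1) * (l + 1) ^ k) * 1 / (Nat.factorial k) * C := by
        gcongr <;> first | exact habs | exact hexp | exact hg k | positivity
      refine le_trans step1 ?_
      simp only [hu]
      rw [mul_pow 2 (l + 1) k, mul_one]
      have h2 : ((k : ℝ) + 1) * (l + 1) ^ k ≤ 2 ^ k * (l + 1) ^ k := by
        gcongr <;> first | exact hk2 | positivity
      calc ((k : ℝ) + 1) * (l + 1) ^ k / (Nat.factorial k) * C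
          ≤ 2 ^ k * (l + 1) ^ k / (Nat.factorial k) * C := by gcongr
        _ = C * (2 ^ k * (l + 1) ^ k / (Nat.factorial k)) := by ring
    · -- summability at l
      apply Summable.of_norm_bounded
        ((Real.summable_pow_div_factorial l).mul_left C)
      intro k
      simp only [Real.norm_eq_abs, abs_mul]
      have hp : |pois l k| = l ^ k * Real.exp (-l) / (Nat.factorial k) := by
        rw [abs_of_nonneg (show (0:ℝ) ≤ pois l k by unfold pois; positivity)]
        rfl
      rw [hp]
      calc l ^ k * Real.exp (-l) / (Nat.factorial k) * |g k|
          ≤ l ^ k * 1 / (Nat.factorial k) * C := by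
            gcongr <;> first | exact exp_neg_le_one hl.le | exact hg k | positivity
        _ = C * (l ^ k / (Nat.factorial k)) := by ring
  convert key using 1
  apply tsum_congr
  intro k
  simp only [hf']
  unfold pois
  rcases k with _ | n
  · simp
  · have hln : l ≠ 0 := ne_of_gt hl
    simp only [Nat.add_sub_cancel]
    push_cast
    field_simp
    ring

/-- The likelihood-ratio gradient estimator for price is unbiased: with
`d ~ Poisson(λ(p))` and `F(p) = p·E[min(d,x)] − (h+b)·E[(x−d)⁺] − b·λ(p) + b·x − c(x−x₀)`,
`∂F/∂p = E[min(d,x)] + p·E[(∂ log P(d)/∂p)·min(d,x)]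
  − (h+b)·E[(∂ log P(d)/∂p)·(x−d)⁺] − b·λ'(p)`,
where `∂ log P(d)/∂p = (d/λ − 1)·λ'(p)`. -/
theorem likelihood_ratio_gradient_unbiased
    (h b c x x0 : ℝ) (lam : ℝ → ℝ)
    (S : Set ℝ) (hbdd : Bornology.IsBounded S)
    (hpos : ∀ p ∈ S, 0 < lam p) (hdiff : ∀ p ∈ S, DifferentiableAt ℝ lam p)
    (F : ℝ → ℝ)
    (hF : ∀ p, F p =
      p * ∑' k : ℕ, pois (lam p) k * min (k : ℝ) x
      - (h + b) * ∑' k : ℕ, pois (lam p) k * max (x - k) 0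
      - b * lam p + b * x - c * (x - x0)) :
    ∀ p ∈ S, deriv F p =
      (∑' k : ℕ, pois (lam p) k * min (k : ℝ) x)
      + p * ∑' k : ℕ, pois (lam p) k * (((k : ℝ) / lam p - 1) * deriv lam p) * min (k : ℝ) x
      - (h + b) * ∑' k : ℕ, pois (lam p) k * (((k : ℝ) / lam p - 1) * deriv lam p) * max (x - k) 0
      - b * deriv lam p := by
  intro p hp
  have hl := hpos p hp
  have hlam : HasDerivAt lam (deriv lam p) p := (hdiff p hp).hasDerivAt
  -- bounded payoffs
  have hg1 : ∀ k : ℕ, |min (k : ℝ) x| ≤ |x| := by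
    intro k
    rcases le_total (k : ℝ) x with hk | hk
    · rw [min_eq_left hk, abs_le]
      constructor
      · have h0 : (0 : ℝ) ≤ (k : ℝ) := Nat.cast_nonneg k
        have h2 := abs_nonneg x
        linarith
      · exact le_trans hk (le_abs_self x)
    · rw [min_eq_right hk]
  have hg2 : ∀ k : ℕ, |max (x - (k : ℝ)) 0| ≤ |x| := by
    intro k
    rcases le_total (x - (k : ℝ)) 0 with hk | hk
    · rw [max_eq_right hk]; simpa using abs_nonneg x
    · rw [max_eq_left hk, abs_of_nonneg hk]
      have : x - (k : ℝ) ≤ x := by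
        have : (0 : ℝ) ≤ k := Nat.cast_nonneg k
        linarith
      exact le_trans this (le_abs_self x)
  have hA := (pois_tsum_hasDerivAt (fun k => min (k : ℝ) x) |x| hg1 hl).comp p hlam
  have hB := (pois_tsum_hasDerivAt (fun k => max (x - (k : ℝ)) 0) |x| hg2 hl).comp p hlam
  -- F has the given derivative
  have hFeq : F = fun q =>
      q * ∑' k : ℕ, pois (lam q) k * min (k : ℝ) x
      - (h + b) * ∑' k : ℕ, pois (lam q) k * max (x - k) 0
      - b * lam q + b * x - c * (x - x0) := funext hF
  have hder : HasDerivAt F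
      ((∑' k : ℕ, pois (lam p) k * min (k : ℝ) x)
        + p * ((∑' k : ℕ, pois (lam p) k * ((k : ℝ) / lam p - 1) * min (k : ℝ) x)
            * deriv lam p)
        - (h + b) * ((∑' k : ℕ, pois (lam p) k * ((k : ℝ) / lam p - 1) * max (x - k) 0)
            * deriv lam p)
        - b * deriv lam p) p := by
    rw [hFeq]
    have h1 : HasDerivAt (fun q => q * ∑' k : ℕ, pois (lam q) k * min (k : ℝ) x)
        ((∑' k : ℕ, pois (lam p) k * min (k : ℝ) x)
          + p * ((∑' k : ℕ, pois (lam p) k * ((k : ℝ) / lam p - 1) * min (k : ℝ) x)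
              * deriv lam p)) p := by
      have := (hasDerivAt_id p).mul hA
      simpa [Function.comp_def, Pi.mul_def] using this
    have h2 := hB.const_mul (h + b)
    have h3 := hlam.const_mul b
    have h4 := ((h1.sub h2).sub h3).add_const (b * x)
    have h5 := h4.sub_const (c * (x - x0))
    exact h5
  rw [hder.deriv]
  have e1 : ∑' k : ℕ, pois (lam p) k * (((k : ℝ) / lam p - 1) * deriv lam p) * min (k : ℝ) x
      = (∑' k : ℕ, pois (lam p) k * ((k : ℝ) / lam p - 1) * min (k : ℝ) x) * deriv lam p := by
    rw [← tsum_mul_right]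
    apply tsum_congr
    intro k
    ring
  have e2 : ∑' k : ℕ, pois (lam p) k * (((k : ℝ) / lam p - 1) * deriv lam p) * max (x - (k : ℝ)) 0
      = (∑' k : ℕ, pois (lam p) k * ((k : ℝ) / lam p - 1) * max (x - (k : ℝ)) 0) * deriv lam p := by
    rw [← tsum_mul_right]
    apply tsum_congr
    intro k
    ring
  rw [e1, e2]
end
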